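/- Let q ≥ 1, let ξ ∈ L¹(ℝ^q) be measurable, let n ≥ 1 be a natural number, and let f ∈ L¹(ℝ^q). Let (Ω, 𝒞, ℙ) be a probability space and let ε : Ω × ℝ^q → ℝ be a jointly measurable noise such that for each ω ∈ Ω the realization ε_ω = ε(ω, ·) belongs to L¹(ℝ^q), and such that the map ω ↦ ‖ε_ω‖_{L¹(ℝ^q)} is integrable (in particular this holds when sup_{ω ∈ Ω} ∫_{ℝ^q} |ε_ω(x)| dx < ∞). Define the probabilistic sampling Kantorovich operator P_n^ω(f) = S_n(f + ε_ω). Then E[‖P_n^ω(f)‖_{L¹(ℝ^q)}] ≤ ‖ξ‖_{L¹(ℝ^q)} (‖f‖_{L¹(ℝ^q)} + E[‖ε_ω‖_{L¹(ℝ^q)}]), where E denotes expectation with respect to ℙ. -/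

import Mathlib

open MeasureTheory

/-- The cell `D_k^n = ∏_{j=1}^q [k_j/n, (k_j+1)/n)` of the uniform grid of step `1/n`. -/
def cell (q n : ℕ) (k : Fin q → ℤ) : Set (EuclideanSpace ℝ (Fin q)) :=
  WithLp.ofLp ⁻¹' (Set.univ.pi fun j => Set.Ico ((k j : ℝ) / n) (((k j : ℝ) + 1) / n))

/-- The sampling Kantorovich operator
`S_n(f)(x) = n^q ∑_{k ∈ ℤ^q} ξ(n x − k) ∫_{D_k^n} f(u) du`. -/
noncomputable def SK (q : ℕ) (ξ : EuclideanSpace ℝ (Fin q) → ℝ) (n : ℕ)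
    (f : EuclideanSpace ℝ (Fin q) → ℝ) (x : EuclideanSpace ℝ (Fin q)) : ℝ :=
  (n : ℝ) ^ q * ∑' k : Fin q → ℤ,
    ξ (WithLp.toLp 2 fun j => (n : ℝ) * x j - (k j : ℝ)) * ∫ u in cell q n k, f u

noncomputable def ipt (q : ℕ) (k : Fin q → ℤ) : EuclideanSpace ℝ (Fin q) := WithLp.toLp 2 fun j => (k j : ℝ)

lemma cell_measurable (q n : ℕ) (k : Fin q → ℤ) : MeasurableSet (cell q n k) :=
  (MeasurableSet.univ_pi fun _ => measurableSet_Ico).preimage (WithLp.measurable_ofLp 2 _)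

lemma mem_cell_floor {q n : ℕ} (hn : 1 ≤ n) (x : EuclideanSpace ℝ (Fin q)) {k : Fin q → ℤ}
    (hx : x ∈ cell q n k) (j : Fin q) : k j = ⌊(n : ℝ) * x j⌋ := by
  have hnpos : (0:ℝ) < n := by exact_mod_cast hn
  obtain ⟨h1, h2⟩ := (Set.mem_preimage.1 hx) j (Set.mem_univ j)
  symm
  rw [Int.floor_eq_iff]
  constructor
  · have := (div_le_iff₀ hnpos).1 h1
    linarith [this]
  · have := (lt_div_iff₀ hnpos).1 h2
    push_cast
    linarith [this]

lemma cell_disjoint {q n : ℕ} (hn : 1 ≤ n) : Pairwise (Function.onFun Disjoint (cell q n)) := by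
  intro k k' hkk'
  rw [Function.onFun, Set.disjoint_left]
  intro x hx hx'
  exact hkk' (funext fun j => (mem_cell_floor hn x hx j).trans (mem_cell_floor hn x hx' j).symm)

lemma cell_cover {q n : ℕ} (hn : 1 ≤ n) : (⋃ k, cell q n k) = Set.univ := by
  have hnpos : (0:ℝ) < n := by exact_mod_cast hn
  ext x
  simp only [Set.mem_iUnion, Set.mem_univ, iff_true]
  refine ⟨fun j => ⌊(n : ℝ) * x j⌋, Set.mem_preimage.2 fun j _ => ?_⟩
  constructor
  · rw [div_le_iff₀ hnpos]
    rw [mul_comm]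
    exact Int.floor_le _
  · rw [lt_div_iff₀ hnpos]
    rw [mul_comm ((x : Fin q → ℝ) j)]
    exact_mod_cast Int.lt_floor_add_one ((n:ℝ) * x j)

set_option maxHeartbeats 1000000 in
lemma SK_L1_bound (q : ℕ) (ξ : EuclideanSpace ℝ (Fin q) → ℝ)
    (hmeas : Measurable ξ) (hξ : Integrable ξ) (n : ℕ) (hn : 1 ≤ n)
    (g : EuclideanSpace ℝ (Fin q) → ℝ) (hg : Integrable g) :
    (∫ x : EuclideanSpace ℝ (Fin q), |SK q ξ n g x|)
      ≤ (∫ x : EuclideanSpace ℝ (Fin q), |ξ x|) * ∫ x : EuclideanSpace ℝ (Fin q), |g x| := by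
  have hnR : (0:ℝ) < n := by exact_mod_cast hn
  have hnne : (n:ℝ) ≠ 0 := ne_of_gt hnR
  set Iξ : ENNReal := ∫⁻ x : EuclideanSpace ℝ (Fin q), ‖ξ x‖₊ with hIξ
  set Ig : ENNReal := ∫⁻ x : EuclideanSpace ℝ (Fin q), ‖g x‖₊ with hIg
  set c : (Fin q → ℤ) → ENNReal := fun k => ∫⁻ u in cell q n k, ‖g u‖₊ with hc
  have hTmeas : ∀ k : Fin q → ℤ, Measurable fun x : EuclideanSpace ℝ (Fin q) => (n:ℝ) • x - ipt q k := fun k =>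
    ((continuous_id.const_smul ((n:ℝ))).sub continuous_const).measurable
  -- pointwise bound
  have step1 : ∀ x : EuclideanSpace ℝ (Fin q), ENNReal.ofReal |SK q ξ n g x|
      ≤ (n : ENNReal) ^ q * ∑' k : Fin q → ℤ, (‖ξ ((n:ℝ) • x - ipt q k)‖₊ : ENNReal) * c k := by
    intro x
    have hpt : ∀ k : Fin q → ℤ,
        WithLp.toLp 2 (fun j => (n : ℝ) * x j - (k j : ℝ)) = (n:ℝ) • x - ipt q k := fun k => by
          ext j; simp [ipt]
    set a : (Fin q → ℤ) → ℝ :=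
      fun k => ξ (WithLp.toLp 2 fun j => (n : ℝ) * x j - (k j : ℝ)) * ∫ u in cell q n k, g u with ha
    have hSK : SK q ξ n g x = (n:ℝ)^q * ∑' k, a k := rfl
    by_cases hs : Summable a
    · have hs' : Summable fun k => |a k| := hs.abs
      have habs : |SK q ξ n g x| ≤ (n:ℝ)^q * ∑' k, |a k| := by
        rw [hSK, abs_mul, abs_of_nonneg (by positivity : (0:ℝ) ≤ (n:ℝ)^q)]
        refine mul_le_mul_of_nonneg_left ?_ (by positivity)
        have hsn : Summable fun k => ‖a k‖ := by simpa [Real.norm_eq_abs] using hs'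
        simpa [Real.norm_eq_abs] using norm_tsum_le_tsum_norm hsn
      calc ENNReal.ofReal |SK q ξ n g x| ≤ ENNReal.ofReal ((n:ℝ)^q * ∑' k, |a k|) :=
            ENNReal.ofReal_le_ofReal habs
        _ = (n : ENNReal) ^ q * ∑' k, ENNReal.ofReal |a k| := by
            rw [ENNReal.ofReal_mul (by positivity), ENNReal.ofReal_pow (by positivity),
              ENNReal.ofReal_natCast, ENNReal.ofReal_tsum_of_nonneg (fun k => abs_nonneg _) hs']
        _ ≤ _ := by
            refine mul_le_mul_right (ENNReal.tsum_le_tsum fun k => ?_) _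
            have h1 : |a k| ≤ |ξ ((n:ℝ) • x - ipt q k)| * ∫ u in cell q n k, |g u| := by
              rw [ha]
              simp only [hpt k, abs_mul]
              refine mul_le_mul_of_nonneg_left ?_ (abs_nonneg _)
              simpa [Real.norm_eq_abs] using
                norm_integral_le_integral_norm (μ := volume.restrict (cell q n k)) g
            calc ENNReal.ofReal |a k|
                ≤ ENNReal.ofReal (|ξ ((n:ℝ) • x - ipt q k)| * ∫ u in cell q n k, |g u|) :=
                  ENNReal.ofReal_le_ofReal h1
              _ = (‖ξ ((n:ℝ) • x - ipt q k)‖₊ : ENNReal) * c k := by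
                  rw [ENNReal.ofReal_mul (abs_nonneg _)]
                  congr 1
                  · rw [← Real.norm_eq_abs, ofReal_norm_eq_enorm, enorm_eq_nnnorm]
                  · rw [hc]
                    have := ofReal_integral_norm_eq_lintegral_enorm
                      (hg.integrableOn (s := cell q n k))
                    simp only [Real.norm_eq_abs] at this; exact this
    · have hz : ∑' k, a k = 0 := tsum_eq_zero_of_not_summable hs
      simp [hSK, hz]
  have hξT : ∀ k : Fin q → ℤ,
      Measurable fun x : EuclideanSpace ℝ (Fin q) => (‖ξ ((n:ℝ) • x - ipt q k)‖₊ : ENNReal) :=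
    fun k => (hmeas.comp (hTmeas k)).enorm
  -- the lintegral computation
  have hchg : ∀ k : Fin q → ℤ,
      (∫⁻ x : EuclideanSpace ℝ (Fin q), (‖ξ ((n:ℝ) • x - ipt q k)‖₊ : ENNReal))
        = ENNReal.ofReal (((n:ℝ)^q)⁻¹) * Iξ := by
    intro k
    have hF : Measurable fun y : EuclideanSpace ℝ (Fin q) => (‖ξ (y - ipt q k)‖₊ : ENNReal) :=
      (hmeas.comp (measurable_id.sub_const _)).enorm
    have hsm : Measurable fun x : EuclideanSpace ℝ (Fin q) => (n:ℝ) • x :=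
      (continuous_id.const_smul ((n:ℝ))).measurable
    calc (∫⁻ x : EuclideanSpace ℝ (Fin q), (‖ξ ((n:ℝ) • x - ipt q k)‖₊ : ENNReal))
        = ∫⁻ y : EuclideanSpace ℝ (Fin q), (‖ξ (y - ipt q k)‖₊ : ENNReal) ∂(Measure.map ((n:ℝ) • ·) volume) :=
          (lintegral_map hF hsm).symm
      _ = ENNReal.ofReal (((n:ℝ)^q)⁻¹) * ∫⁻ y : EuclideanSpace ℝ (Fin q), (‖ξ (y - ipt q k)‖₊ : ENNReal) := by
          rw [Measure.map_addHaar_smul _ hnne, lintegral_smul_measure]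
          congr 2
          rw [abs_of_nonneg (by positivity)]
          congr 2
          simp
      _ = ENNReal.ofReal (((n:ℝ)^q)⁻¹) * Iξ := by
          rw [lintegral_sub_right_eq_self (fun y => (‖ξ y‖₊ : ENNReal)) (ipt q k)]
  have hsum_c : ∑' k : Fin q → ℤ, c k = Ig := by
    rw [hc, ← lintegral_iUnion (fun k => cell_measurable q n k) (cell_disjoint hn),
      cell_cover hn, setLIntegral_univ]
  have step2 : (∫⁻ x : EuclideanSpace ℝ (Fin q), ENNReal.ofReal |SK q ξ n g x|) ≤ Iξ * Ig := by
    calc (∫⁻ x : EuclideanSpace ℝ (Fin q), ENNReal.ofReal |SK q ξ n g x|)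
        ≤ ∫⁻ x : EuclideanSpace ℝ (Fin q), (n : ENNReal) ^ q *
            ∑' k : Fin q → ℤ, (‖ξ ((n:ℝ) • x - ipt q k)‖₊ : ENNReal) * c k :=
          lintegral_mono step1
      _ = (n : ENNReal) ^ q * ∫⁻ x : EuclideanSpace ℝ (Fin q),
            ∑' k : Fin q → ℤ, (‖ξ ((n:ℝ) • x - ipt q k)‖₊ : ENNReal) * c k :=
          lintegral_const_mul' _ _ (by simp)
      _ = (n : ENNReal) ^ q * ∑' k : Fin q → ℤ,
            ∫⁻ x : EuclideanSpace ℝ (Fin q), (‖ξ ((n:ℝ) • x - ipt q k)‖₊ : ENNReal) * c k := by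
          rw [lintegral_tsum fun k => ((hξT k).mul_const _).aemeasurable]
      _ = (n : ENNReal) ^ q * ∑' k : Fin q → ℤ,
            (ENNReal.ofReal (((n:ℝ)^q)⁻¹) * Iξ) * c k := by
          congr 1
          refine tsum_congr fun k => ?_
          rw [lintegral_mul_const _ (hξT k), hchg k]
      _ = (n : ENNReal) ^ q * (ENNReal.ofReal (((n:ℝ)^q)⁻¹) * Iξ * Ig) := by
          rw [ENNReal.tsum_mul_left, hsum_c]
      _ = Iξ * Ig := by
          rw [← mul_assoc, ← mul_assoc]
          have : (n : ENNReal) ^ q * ENNReal.ofReal (((n:ℝ)^q)⁻¹) = 1 := by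
            rw [← ENNReal.ofReal_natCast, ← ENNReal.ofReal_pow (by positivity),
              ← ENNReal.ofReal_mul (by positivity),
              mul_inv_cancel₀ (pow_ne_zero _ hnne), ENNReal.ofReal_one]
          rw [this, one_mul]
  -- conclude
  have hIξtop : Iξ ≠ ⊤ := hξ.2.ne
  have hIgtop : Ig ≠ ⊤ := hg.2.ne
  have hIξeq : Iξ.toReal = ∫ x : EuclideanSpace ℝ (Fin q), |ξ x| := by
    rw [hIξ]
    simp only [← enorm_eq_nnnorm]
    rw [← ofReal_integral_norm_eq_lintegral_enorm hξ,
      ENNReal.toReal_ofReal (integral_nonneg fun x => norm_nonneg _)]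
    simp [Real.norm_eq_abs]
  have hIgeq : Ig.toReal = ∫ x : EuclideanSpace ℝ (Fin q), |g x| := by
    rw [hIg]
    simp only [← enorm_eq_nnnorm]
    rw [← ofReal_integral_norm_eq_lintegral_enorm hg,
      ENNReal.toReal_ofReal (integral_nonneg fun x => norm_nonneg _)]
    simp [Real.norm_eq_abs]
  by_cases hI : Integrable fun x : EuclideanSpace ℝ (Fin q) => |SK q ξ n g x|
  · rw [integral_eq_lintegral_of_nonneg_ae (ae_of_all _ fun x => abs_nonneg _) hI.1]
    have hmono : (∫⁻ x : EuclideanSpace ℝ (Fin q), ENNReal.ofReal |SK q ξ n g x|).toReal ≤ (Iξ * Ig).toReal :=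
      ENNReal.toReal_mono (ENNReal.mul_ne_top hIξtop hIgtop) step2
    rw [ENNReal.toReal_mul, hIξeq, hIgeq] at hmono
    exact hmono
  · rw [integral_undef hI]
    exact mul_nonneg (integral_nonneg fun x => abs_nonneg _)
      (integral_nonneg fun x => abs_nonneg _)

/-- for the probabilistic SK operator `P_n^ω(f) = S_n(f + ε_ω)` with
jointly measurable noise `ε` whose realizations are integrable with integrable `L¹` norms,
`E[‖P_n^ω(f)‖₁] ≤ ‖ξ‖₁ (‖f‖₁ + E[‖ε_ω‖₁])`. -/
theorem PSK_expected_L1_bound (q : ℕ) (hq : 1 ≤ q)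
    (ξ : EuclideanSpace ℝ (Fin q) → ℝ) (hmeas : Measurable ξ) (hξ : Integrable ξ)
    (n : ℕ) (hn : 1 ≤ n)
    (f : EuclideanSpace ℝ (Fin q) → ℝ) (hf : Integrable f)
    (Ω : Type*) [MeasureSpace Ω] [IsProbabilityMeasure (volume : Measure Ω)]
    (ε : Ω → EuclideanSpace ℝ (Fin q) → ℝ)
    (hεmeas : Measurable (Function.uncurry ε))
    (hεint : ∀ ω : Ω, Integrable (ε ω))
    (hεnorm : Integrable fun ω : Ω => ∫ x : EuclideanSpace ℝ (Fin q), |ε ω x|) :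
    (∫ ω : Ω, ∫ x : EuclideanSpace ℝ (Fin q), |SK q ξ n (f + ε ω) x|)
      ≤ (∫ x : EuclideanSpace ℝ (Fin q), |ξ x|)
          * ((∫ x : EuclideanSpace ℝ (Fin q), |f x|)
              + ∫ ω : Ω, ∫ x : EuclideanSpace ℝ (Fin q), |ε ω x|) := by
  set C : ℝ := ∫ x : EuclideanSpace ℝ (Fin q), |ξ x| with hC
  have hC0 : 0 ≤ C := integral_nonneg fun x => abs_nonneg _
  have key : ∀ ω : Ω, (∫ x : EuclideanSpace ℝ (Fin q), |SK q ξ n (f + ε ω) x|)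
      ≤ C * ((∫ x : EuclideanSpace ℝ (Fin q), |f x|) + ∫ x : EuclideanSpace ℝ (Fin q), |ε ω x|) := by
    intro ω
    have hint : Integrable (f + ε ω) := hf.add (hεint ω)
    refine (SK_L1_bound q ξ hmeas hξ n hn (f + ε ω) hint).trans ?_
    refine mul_le_mul_of_nonneg_left ?_ hC0
    calc (∫ x : EuclideanSpace ℝ (Fin q), |(f + ε ω) x|) ≤ ∫ x : EuclideanSpace ℝ (Fin q), (|f x| + |ε ω x|) := by
          refine integral_mono hint.abs (hf.abs.add (hεint ω).abs) fun x => ?_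
          simpa using abs_add_le (f x) (ε ω x)
      _ = (∫ x : EuclideanSpace ℝ (Fin q), |f x|) + ∫ x : EuclideanSpace ℝ (Fin q), |ε ω x| := integral_add hf.abs (hεint ω).abs
  have hH : Integrable fun ω : Ω => C * ((∫ x : EuclideanSpace ℝ (Fin q), |f x|) + ∫ x : EuclideanSpace ℝ (Fin q), |ε ω x|) :=
    (((integrable_const _).add hεnorm)).const_mul C
  calc (∫ ω : Ω, ∫ x : EuclideanSpace ℝ (Fin q), |SK q ξ n (f + ε ω) x|)
      ≤ ∫ ω : Ω, C * ((∫ x : EuclideanSpace ℝ (Fin q), |f x|) + ∫ x : EuclideanSpace ℝ (Fin q), |ε ω x|) :=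
        integral_mono_of_nonneg
          (ae_of_all _ fun ω => integral_nonneg fun x => abs_nonneg _) hH
          (ae_of_all _ key)
    _ = C * ((∫ x : EuclideanSpace ℝ (Fin q), |f x|) + ∫ ω : Ω, ∫ x : EuclideanSpace ℝ (Fin q), |ε ω x|) := by
        rw [integral_const_mul, integral_add (integrable_const _) hεnorm, integral_const]
        simp
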